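/- Let 𝔑 be a finite-dimensional nilpotent Lie algebra over a field of characteristic zero, and let f : 𝔑 → 𝔑 be a Lie algebra automorphism whose induced map on the abelianization 𝔑/[𝔑,𝔑] is unipotent. Then f itself is unipotent. -/

import Mathlib

section Aux

variable {K : Type*} [Field K] {L : Type*} [LieRing L] [LieAlgebra K L]

/-- Binomial-type expansion membership lemma. -/
private lemma key_aux (u g : Module.End K L) (hcomm : Commute g u)
    (hleib : ∀ c d : L, u ⁅c, d⁆ = ⁅u c, g d⁆ + ⁅c, u d⁆)
    (S : Submodule K L) :
    ∀ (N : ℕ) (a b : L),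
      (∀ i j : ℕ, i + j = N → ⁅(u ^ i) a, (g ^ i) ((u ^ j) b)⁆ ∈ S) →
        (u ^ N) ⁅a, b⁆ ∈ S := by
  intro N
  induction N with
  | zero =>
    intro a b hyp
    simpa using hyp 0 0 rfl
  | succ N ih =>
    intro a b hyp
    have e : (u ^ (N + 1)) ⁅a, b⁆ = (u ^ N) (u ⁅a, b⁆) := by
      rw [pow_succ, Module.End.mul_apply]
    rw [e, hleib, map_add]
    refine S.add_mem ?_ ?_
    · refine ih (u a) (g b) ?_
      intro i j hij
      have h1 : (u ^ i) (u a) = (u ^ (i + 1)) a := by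
        rw [pow_succ, Module.End.mul_apply]
      have h2 : (g ^ i) ((u ^ j) (g b)) = (g ^ (i + 1)) ((u ^ j) b) := by
        have : (u ^ j) (g b) = g ((u ^ j) b) := by
          have := (hcomm.symm.pow_left j)
          calc (u ^ j) (g b) = ((u ^ j) * g) b := rfl
            _ = (g * (u ^ j)) b := by rw [this.eq]
            _ = g ((u ^ j) b) := rfl
        calc (g ^ i) ((u ^ j) (g b)) = (g ^ i) (g ((u ^ j) b)) := by rw [this]
          _ = ((g ^ i) * g) ((u ^ j) b) := rfl
          _ = (g ^ (i + 1)) ((u ^ j) b) := by rw [pow_succ]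
      rw [h1, h2]
      exact hyp (i + 1) j (by omega)
    · refine ih a (u b) ?_
      intro i j hij
      have h2 : (u ^ j) (u b) = (u ^ (j + 1)) b := by
        rw [pow_succ, Module.End.mul_apply]
      rw [h2]
      exact hyp i (j + 1) (by omega)

end Aux

/-- An automorphism of a finite-dimensional nilpotent Lie algebra (over a field of
characteristic zero) inducing a unipotent map on the abelianization is itself unipotent. -/
theorem unipotent_of_unipotent_on_abelianization {K : Type*} [Field K] [CharZero K]
    {L : Type*} [LieRing L] [LieAlgebra K L] [FiniteDimensional K L]
    [LieRing.IsNilpotent L] (f : L ≃ₗ⁅K⁆ L)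
    (h : ∃ n : ℕ, ∀ x : L,
      (((f.toLieHom.toLinearMap - LinearMap.id : Module.End K L)) ^ n) x ∈
        ⁅(⊤ : LieIdeal K L), (⊤ : LieIdeal K L)⁆) :
    IsNilpotent (f.toLieHom.toLinearMap - LinearMap.id : Module.End K L) := by
  obtain ⟨n, hn⟩ := h
  set g : Module.End K L := f.toLieHom.toLinearMap with hg
  set u : Module.End K L := f.toLieHom.toLinearMap - LinearMap.id with hu
  have hga : ∀ x : L, g x = f x := fun x => rfl
  have hua : ∀ x : L, u x = f x - x := fun x => rfl
  have hcomm : Commute g u := by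
    have : u = g - 1 := rfl
    rw [this]
    exact (Commute.refl g).sub_right (Commute.one_right g)
  have hleib : ∀ c d : L, u ⁅c, d⁆ = ⁅u c, g d⁆ + ⁅c, u d⁆ := by
    intro c d
    rw [hua, hua, hua, hga]
    rw [sub_lie, lie_sub]
    have hf : f ⁅c, d⁆ = ⁅f c, f d⁆ := LieEquiv.map_lie f c d
    rw [hf]
    abel
  set C : ℕ → LieIdeal K L := fun k => LieModule.lowerCentralSeries K L L k with hC
  have hC0 : C 0 = ⊤ := LieModule.lowerCentralSeries_zero K L L
  have hCsucc : ∀ k, C (k + 1) = ⁅(⊤ : LieIdeal K L), C k⁆ := fun k =>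
    (⊤ : LieSubmodule K L L).lcs_succ k
  -- f preserves the lower central series
  have hfC : ∀ k, ∀ x ∈ C k, g x ∈ C k := by
    intro k
    induction k with
    | zero => intro x _; exact LieSubmodule.mem_top _
    | succ k ih =>
      intro x hx
      rw [hCsucc] at hx ⊢
      rw [← LieSubmodule.mem_toSubmodule, LieSubmodule.lieIdeal_oper_eq_linear_span'] at hx
      induction hx using Submodule.span_induction with
      | mem z hz =>
        obtain ⟨a, -, b, hb, rfl⟩ := hz
        have : g ⁅a, b⁆ = ⁅f a, f b⁆ := LieEquiv.map_lie f a b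
        rw [this]
        exact LieSubmodule.lie_mem_lie (LieSubmodule.mem_top _) (ih _ hb)
      | zero => simp
      | add y z _ _ hy hz => rw [map_add]; exact add_mem hy hz
      | smul t y _ hy => rw [map_smul]; exact SMulMemClass.smul_mem t hy
  have huC : ∀ k, ∀ x ∈ C k, u x ∈ C k := by
    intro k x hx
    have : u x = g x - x := rfl
    rw [this]
    exact sub_mem (hfC k x hx) hx
  have hupC : ∀ (p k : ℕ), ∀ x ∈ C k, (u ^ p) x ∈ C k := by
    intro p
    induction p with
    | zero => intro k x hx; simpa using hx
    | succ p ih =>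
      intro k x hx
      have : (u ^ (p + 1)) x = (u ^ p) (u x) := by rw [pow_succ, Module.End.mul_apply]
      rw [this]
      exact ih k _ (huC k x hx)
  have hgpC : ∀ (p k : ℕ), ∀ x ∈ C k, (g ^ p) x ∈ C k := by
    intro p
    induction p with
    | zero => intro k x hx; simpa using hx
    | succ p ih =>
      intro k x hx
      have : (g ^ (p + 1)) x = (g ^ p) (g x) := by rw [pow_succ, Module.End.mul_apply]
      rw [this]
      exact ih k _ (hfC k x hx)
  -- brackets of C 1 with C k land in C (k+2)
  have hlie1 : ∀ (k : ℕ) (x : L), x ∈ C 1 → ∀ y ∈ C k, ⁅x, y⁆ ∈ C (k + 2) := by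
    intro k x hx y hy
    rw [hCsucc 0, hC0, ← LieSubmodule.mem_toSubmodule, LieSubmodule.lieIdeal_oper_eq_linear_span'] at hx
    induction hx using Submodule.span_induction with
    | mem z hz =>
      obtain ⟨a, -, b, -, rfl⟩ := hz
      rw [lie_lie]
      refine sub_mem ?_ ?_
      · rw [hCsucc (k+1)]
        exact LieSubmodule.lie_mem_lie (LieSubmodule.mem_top _)
          (by rw [hCsucc k]; exact LieSubmodule.lie_mem_lie (LieSubmodule.mem_top _) hy)
      · rw [hCsucc (k+1)]
        exact LieSubmodule.lie_mem_lie (LieSubmodule.mem_top _)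
          (by rw [hCsucc k]; exact LieSubmodule.lie_mem_lie (LieSubmodule.mem_top _) hy)
    | zero => rw [zero_lie]; exact zero_mem _
    | add y' z' _ _ hy' hz' => rw [add_lie]; exact add_mem hy' hz'
    | smul t y' _ hy' => rw [smul_lie]; exact SMulMemClass.smul_mem t hy'
  -- base of the relative step: u^n maps into C 1
  have hbase : ∀ x : L, (u ^ n) x ∈ C 1 := by
    intro x
    rw [hCsucc 0, hC0]
    exact hn x
  -- step: for each k there is m with u^m (C k) ⊆ C (k+1)
  have hstep : ∀ k : ℕ, ∃ m : ℕ, ∀ x ∈ C k, (u ^ m) x ∈ C (k + 1) := by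
    intro k
    induction k with
    | zero => exact ⟨n, fun x _ => hbase x⟩
    | succ k ih =>
      obtain ⟨m, hm⟩ := ih
      refine ⟨n + m, ?_⟩
      intro x hx
      rw [hCsucc k, ← LieSubmodule.mem_toSubmodule, LieSubmodule.lieIdeal_oper_eq_linear_span'] at hx
      induction hx using Submodule.span_induction with
      | mem z hz =>
        obtain ⟨a, -, b, hb, rfl⟩ := hz
        refine key_aux u g hcomm hleib (C (k + 2)).toSubmodule (n + m) a b ?_
        intro i j hij
        show ⁅(u ^ i) a, (g ^ i) ((u ^ j) b)⁆ ∈ C (k + 2)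
        by_cases hi : n ≤ i
        · obtain ⟨d, rfl⟩ : ∃ d, i = d + n := ⟨i - n, by omega⟩
          have h1 : (u ^ (d + n)) a ∈ C 1 := by
            have : (u ^ (d + n)) a = (u ^ d) ((u ^ n) a) := by
              rw [pow_add, Module.End.mul_apply]
            rw [this]
            exact hupC _ 1 _ (hbase a)
          have h2 : (g ^ (d + n)) ((u ^ j) b) ∈ C k := hgpC _ k _ (hupC _ k _ hb)
          exact hlie1 k _ h1 _ h2
        · have hj : m ≤ j := by omega
          obtain ⟨d, rfl⟩ : ∃ d, j = d + m := ⟨j - m, by omega⟩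
          have h2 : (g ^ i) ((u ^ (d + m)) b) ∈ C (k + 1) := by
            have : (u ^ (d + m)) b = (u ^ d) ((u ^ m) b) := by
              rw [pow_add, Module.End.mul_apply]
            rw [this]
            exact hgpC _ (k+1) _ (hupC _ (k+1) _ (hm b hb))
          rw [hCsucc (k+1)]
          exact LieSubmodule.lie_mem_lie (LieSubmodule.mem_top _) h2
      | zero => rw [map_zero]; exact zero_mem _
      | add y z _ _ hy hz => rw [map_add]; exact add_mem hy hz
      | smul t y _ hy => rw [map_smul]; exact SMulMemClass.smul_mem t hy
  -- absolute: for each k there is M with u^M L ⊆ C k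
  have habs : ∀ k : ℕ, ∃ M : ℕ, ∀ x : L, (u ^ M) x ∈ C k := by
    intro k
    induction k with
    | zero => exact ⟨0, fun x => LieSubmodule.mem_top _⟩
    | succ k ih =>
      obtain ⟨M, hM⟩ := ih
      obtain ⟨m, hm⟩ := hstep k
      refine ⟨m + M, fun x => ?_⟩
      have : (u ^ (m + M)) x = (u ^ m) ((u ^ M) x) := by
        rw [← Module.End.mul_apply, ← pow_add]
      rw [this]
      exact hm _ (hM x)
  obtain ⟨k0, hk0⟩ := LieModule.IsNilpotent.nilpotent K L L
  obtain ⟨M, hM⟩ := habs k0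
  refine ⟨M, ?_⟩
  ext x
  have hx := hM x
  have hCbot : C k0 = ⊥ := hk0
  rw [hCbot] at hx
  simpa using (LieSubmodule.mem_bot _).mp hx
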